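/- For every k ≥ 1 and t ≥ 3, there exists an edge-coloring of the complete graph on 2(t-1)·5^{(k-2)/2} vertices (if k is even) or (t-1)·5^{(k-1)/2} vertices (if k is odd) using at most k colors that contains no rainbow triangle and no monochromatic copy of S_t^2. Consequently gr_k(K_3 ; S_t^2) ≥ 2(t-1)·5^{(k-2)/2} + 1 for even k and ≥ (t-1)·5^{(k-1)/2} + 1 for odd k. -/

import Mathlib

/-- `SGraph t r` is the graph `S_t^r`: a star `K_{1,t-1}` with center `0`
together with `r` independent edges `(1,2), (3,4), …, (2r-1,2r)` among the leaves. -/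
def SGraph (t r : ℕ) : SimpleGraph (Fin t) :=
  SimpleGraph.fromRel fun a b =>
    a.val = 0 ∨ (b.val = a.val + 1 ∧ a.val % 2 = 1 ∧ b.val ≤ 2 * r)

/-- A monochromatic copy of `H` in the edge-coloring `c` of the complete graph on `V`. -/
def HasMonoCopy {α V C : Type*} (H : SimpleGraph α) (c : Sym2 V → C) : Prop :=
  ∃ (f : α ↪ V) (col : C), ∀ a b : α, H.Adj a b → c s(f a, f b) = col

/-- A copy of `H` in the edge-coloring `c` all of whose edges get color `col`. -/
def HasMonoCopyCol {α V C : Type*} (H : SimpleGraph α) (c : Sym2 V → C) (col : C) : Prop :=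
  ∃ f : α ↪ V, ∀ a b : α, H.Adj a b → c s(f a, f b) = col

/-- A rainbow triangle in the edge-coloring `c` of the complete graph on `V`. -/
def HasRainbowTriangle {V C : Type*} (c : Sym2 V → C) : Prop :=
  ∃ x y z : V,
    c s(x, y) ≠ c s(y, z) ∧ c s(y, z) ≠ c s(x, z) ∧ c s(x, y) ≠ c s(x, z)

namespace GRaux


def f5 (a b : Fin 5) : Bool := decide ((a.val + 1) % 5 = b.val ∨ (b.val + 1) % 5 = a.val)

lemma f5_symm : ∀ a b : Fin 5, f5 a b = f5 b a := by decide

lemma f5_tri : ∀ a b c : Fin 5, a ≠ b → b ≠ c → a ≠ c →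
    f5 a b = f5 b c → f5 b c = f5 a c → False := by decide

variable {j : ℕ}

def dSet (x y : Fin j → Fin 5) : Finset (Fin j) := Finset.univ.filter fun i => x i ≠ y i

lemma dSet_comm (x y : Fin j → Fin 5) : dSet x y = dSet y x := by
  ext i; simp [dSet, ne_comm]

lemma dSet_nonempty {x y : Fin j → Fin 5} (h : x ≠ y) : (dSet x y).Nonempty := by
  obtain ⟨i, hi⟩ := Function.ne_iff.mp h
  exact ⟨i, by simp [dSet, hi]⟩

lemma dSet_eq_of_not_nonempty {x y : Fin j → Fin 5} (h : ¬ (dSet x y).Nonempty) : x = y := by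
  by_contra hne
  exact h (dSet_nonempty hne)

lemma agree_above {x y : Fin j → Fin 5} (h : (dSet x y).Nonempty) {i : Fin j}
    (hi : (dSet x y).max' h < i) : x i = y i := by
  by_contra hne
  exact absurd (Finset.le_max' _ i (by simp [dSet, hne])) (not_le.mpr hi)

lemma max'_ne {x y : Fin j → Fin 5} (h : (dSet x y).Nonempty) :
    x ((dSet x y).max' h) ≠ y ((dSet x y).max' h) := by
  have := (dSet x y).max'_mem h
  simpa [dSet] using this

def digColor (x y : Fin j → Fin 5) : ℕ :=
  if h : (dSet x y).Nonempty then
    2 * ((dSet x y).max' h).val + 1 +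
      (f5 (x ((dSet x y).max' h)) (y ((dSet x y).max' h))).toNat
  else 0

lemma digColor_comm (x y : Fin j → Fin 5) : digColor x y = digColor y x := by
  unfold digColor
  by_cases h : (dSet x y).Nonempty
  · have h' : (dSet y x).Nonempty := dSet_comm x y ▸ h
    rw [dif_pos h, dif_pos h']
    have hm : (dSet x y).max' h = (dSet y x).max' h' := by
      congr 1
      exact dSet_comm x y
    rw [hm, f5_symm]
  · have h' : ¬ (dSet y x).Nonempty := by rwa [dSet_comm y x]
    rw [dif_neg h, dif_neg h']

lemma digColor_le (x y : Fin j → Fin 5) : digColor x y ≤ 2 * j := by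
  unfold digColor
  split
  · rename_i h
    have h1 := ((dSet x y).max' h).isLt
    have h2 := Bool.toNat_le (f5 (x ((dSet x y).max' h)) (y ((dSet x y).max' h)))
    omega
  · omega

lemma digColor_eq_zero {x y : Fin j → Fin 5} (h : digColor x y = 0) : x = y := by
  unfold digColor at h
  split at h
  · omega
  · exact dSet_eq_of_not_nonempty (by assumption)

lemma bool_pigeon : ∀ b1 b2 b3 : Bool, b1 = b2 ∨ b2 = b3 ∨ b1 = b3 := by decide

lemma dig_tri (x y z : Fin j → Fin 5) :
    digColor x y = digColor y z ∨ digColor y z = digColor x z ∨ digColor x y = digColor x z := by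
  by_cases hxy : x = y
  · right; left; rw [hxy]
  by_cases hyz : y = z
  · right; right; rw [hyz]
  by_cases hxz : x = z
  · left; rw [hxz, digColor_comm]
  have hXY := dSet_nonempty hxy
  have hYZ := dSet_nonempty hyz
  have hXZ := dSet_nonempty hxz
  set a := (dSet x y).max' hXY with ha
  set b := (dSet y z).max' hYZ with hb
  set c := (dSet x z).max' hXZ with hc
  rcases lt_trichotomy a b with hab | hab | hab
  · -- level xy smaller; claim b = c, edges yz and xz share color
    have hbc : b = c := by
      rcases lt_trichotomy c b with h1 | h1 | h1
      · exfalso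
        have e1 : x b = y b := agree_above hXY hab
        have e2 : x b = z b := agree_above hXZ h1
        exact max'_ne hYZ (e1 ▸ e2)
      · exact h1.symm
      · exfalso
        have e1 : y c = z c := agree_above hYZ h1
        have e2 : x c = y c := agree_above hXY (hab.trans h1)
        exact max'_ne hXZ (e2.trans e1)
    right; left
    unfold digColor
    rw [dif_pos hYZ, dif_pos hXZ, ← hb, ← hc, ← hbc]
    have e1 : x b = y b := agree_above hXY hab
    rw [e1]
  · -- a = b
    rcases lt_trichotomy c a with h1 | h1 | h1
    · -- c < a : edges xy and yz share color
      left
      unfold digColor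
      rw [dif_pos hXY, dif_pos hYZ, ← ha, ← hb, ← hab]
      have e1 : x a = z a := agree_above hXZ h1
      rw [e1, f5_symm, f5_symm (y a)]
    · -- all levels equal; pigeonhole on bits
      rcases bool_pigeon (f5 (x a) (y a)) (f5 (y a) (z a)) (f5 (x a) (z a)) with hp | hp | hp
      · left
        unfold digColor
        rw [dif_pos hXY, dif_pos hYZ, ← ha, ← hb, ← hab, hp]
      · right; left
        unfold digColor
        rw [dif_pos hYZ, dif_pos hXZ, ← hb, ← hc, ← hab, h1, hp]
      · right; right
        unfold digColor
        rw [dif_pos hXY, dif_pos hXZ, ← ha, ← hc, h1, hp]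
    · exfalso
      have e1 : y c = z c := agree_above hYZ (hab.symm.trans_lt h1)
      have e2 : x c = y c := agree_above hXY h1
      exact max'_ne hXZ (e2.trans e1)
  · -- b < a : claim c = a, edges xy and xz share color
    have hca : c = a := by
      rcases lt_trichotomy c a with h1 | h1 | h1
      · exfalso
        have e1 : y a = z a := agree_above hYZ hab
        have e2 : x a = z a := agree_above hXZ h1
        exact max'_ne hXY (e2.trans e1.symm)
      · exact h1
      · exfalso
        have e1 : x c = y c := agree_above hXY h1
        have e2 : y c = z c := agree_above hYZ (hab.trans h1)
        exact max'_ne hXZ (e1.trans e2)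
    right; right
    unfold digColor
    rw [dif_pos hXY, dif_pos hXZ, ← ha, ← hc, hca]
    have e1 : y a = z a := agree_above hYZ hab
    rw [e1]

-- the substituted coloring on the product type
def colorNat {t' m : ℕ} (u v : Fin t' × (Fin j → Fin 5) × Fin m) : ℕ :=
  if u.2.2 ≠ v.2.2 then 2 * j + 1 else digColor u.2.1 v.2.1

lemma colorNat_comm {t' m : ℕ} (u v : Fin t' × (Fin j → Fin 5) × Fin m) :
    colorNat u v = colorNat v u := by
  unfold colorNat
  by_cases h : u.2.2 = v.2.2
  · rw [if_neg (by simp [h]), if_neg (by simp [h.symm]), digColor_comm]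
  · rw [if_pos h, if_pos (Ne.symm h)]

lemma colorNat_lt {t' m k : ℕ}
    (hk : k = 2 * j + 2 ∨ (m = 1 ∧ k = 2 * j + 1))
    (u v : Fin t' × (Fin j → Fin 5) × Fin m) : colorNat u v < k := by
  unfold colorNat
  split
  · rcases hk with h | ⟨hm, h⟩
    · omega
    · rename_i htop
      exfalso
      apply htop
      subst hm
      exact Subsingleton.elim _ _
  · have := digColor_le (j := j) u.2.1 v.2.1
    omega

lemma colorNat_tri {t' m : ℕ} (u v w : Fin t' × (Fin j → Fin 5) × Fin m) :
    colorNat u v = colorNat v w ∨ colorNat v w = colorNat u w ∨ colorNat u v = colorNat u w := by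
  unfold colorNat
  by_cases h1 : u.2.2 = v.2.2 <;> by_cases h2 : v.2.2 = w.2.2
  · rw [if_neg (by simp [h1]), if_neg (by simp [h2]), if_neg (by simp [h1.trans h2])]
    exact dig_tri _ _ _
  · right; left
    rw [if_pos h2, if_pos (fun h => h2 (h1.symm.trans h))]
  · right; right
    rw [if_pos h1, if_pos (fun h => h1 (h.trans h2.symm))]
  · by_cases h3 : u.2.2 = w.2.2
    · left; rw [if_pos h1, if_pos h2]
    · left; rw [if_pos h1, if_pos h2]


lemma toNat_inj {a b : Bool} (h : a.toNat = b.toNat) : a = b := by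
  cases a <;> cases b <;> simp_all

lemma noMono {t t' j m k : ℕ} (ht : 3 ≤ t) (ht' : t' = t - 1) (hm : m ≤ 2)
    (hk : k = 2 * j + 2 ∨ (m = 1 ∧ k = 2 * j + 1))
    (f : Fin t ↪ Fin t' × (Fin j → Fin 5) × Fin m) (colv : ℕ)
    (h : ∀ a b : Fin t, (SGraph t 2).Adj a b → colorNat (f a) (f b) = colv) : False := by
  have h0 : (0 : ℕ) < t := by omega
  have h1t : (1 : ℕ) < t := by omega
  have h2t : (2 : ℕ) < t := by omega
  set v0 : Fin t := ⟨0, h0⟩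
  set v1 : Fin t := ⟨1, h1t⟩
  set v2 : Fin t := ⟨2, h2t⟩
  have adj0 : ∀ b : Fin t, b ≠ v0 → (SGraph t 2).Adj v0 b := by
    intro b hb
    rw [SGraph, SimpleGraph.fromRel_adj]
    exact ⟨Ne.symm hb, Or.inl (Or.inl rfl)⟩
  have adj12 : (SGraph t 2).Adj v1 v2 := by
    rw [SGraph, SimpleGraph.fromRel_adj]
    refine ⟨?_, Or.inl (Or.inr ⟨rfl, rfl, by norm_num⟩)⟩
    intro hh
    have := congrArg Fin.val hh
    simp [v1, v2] at this
  have e01 : colorNat (f v0) (f v1) = colv := h _ _ (adj0 v1 (by simp [v0, v1, Fin.ext_iff]))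
  have e02 : colorNat (f v0) (f v2) = colv := h _ _ (adj0 v2 (by simp [v0, v2, Fin.ext_iff]))
  have e12 : colorNat (f v1) (f v2) = colv := h _ _ adj12
  by_cases htop : (f v0).2.2 ≠ (f v1).2.2
  · -- col = 2j+1, all tops pairwise distinct, contradiction in Fin m, m ≤ 2
    have hc : colv = 2 * j + 1 := by rw [← e01]; unfold colorNat; rw [if_pos htop]
    have tops : ∀ a b : Fin t, colorNat (f a) (f b) = colv → (f a).2.2 ≠ (f b).2.2 := by
      intro a b hab
      by_contra hh
      unfold colorNat at hab
      rw [if_neg (by simp [hh])] at hab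
      have := digColor_le (j := j) (f a).2.1 (f b).2.1
      omega
    have t01 := tops _ _ e01
    have t02 := tops _ _ e02
    have t12 := tops _ _ e12
    have d01 : ((f v0).2.2 : ℕ) ≠ ((f v1).2.2 : ℕ) := fun hq => t01 (Fin.ext hq)
    have d02 : ((f v0).2.2 : ℕ) ≠ ((f v2).2.2 : ℕ) := fun hq => t02 (Fin.ext hq)
    have d12 : ((f v1).2.2 : ℕ) ≠ ((f v2).2.2 : ℕ) := fun hq => t12 (Fin.ext hq)
    have b0 := (f v0).2.2.isLt
    have b1 := (f v1).2.2.isLt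
    have b2 := (f v2).2.2.isLt
    omega
  · rw [not_not] at htop
    have hc01 : colv = digColor (f v0).2.1 (f v1).2.1 := by
      rw [← e01]; unfold colorNat; rw [if_neg (by simp [htop])]
    by_cases h0c : colv = 0
    · -- all of f has the same "tail", so b ↦ (f b).1 is injective into Fin (t-1)
      have tail : ∀ b : Fin t, (f b).2 = (f v0).2 := by
        intro b
        by_cases hb : b = v0
        · rw [hb]
        · have eb : colorNat (f v0) (f b) = colv := h _ _ (adj0 b hb)
          unfold colorNat at eb
          by_cases hbt : (f v0).2.2 = (f b).2.2
          · rw [if_neg (by simp [hbt])] at eb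
            have hdig : (f v0).2.1 = (f b).2.1 := digColor_eq_zero (by omega)
            exact Prod.ext hdig.symm hbt.symm
          · rw [if_pos hbt] at eb
            omega
      have hinj : Function.Injective (fun b : Fin t => (f b).1) := by
        intro a b hab
        apply f.injective
        exact Prod.ext hab ((tail a).trans (tail b).symm)
      have := Fintype.card_le_of_injective _ hinj
      simp at this
      omega
    · -- middle level: all three edges have same nonzero digColor
      have tops2 : ∀ a b : Fin t, colorNat (f a) (f b) = colv →
          digColor (f a).2.1 (f b).2.1 = colv := by
        intro a b hab
        unfold colorNat at hab
        split at hab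
        · exfalso
          have hle := digColor_le (j := j) (f v0).2.1 (f v1).2.1
          omega
        · exact hab
      have g01 := tops2 _ _ e01
      have g02 := tops2 _ _ e02
      have g12 := tops2 _ _ e12
      set x := (f v0).2.1
      set y := (f v1).2.1
      set z := (f v2).2.1
      have hxyne : x ≠ y := fun hq => h0c (by rw [← g01, hq]; exact
        (by unfold digColor; rw [dif_neg (fun hn => max'_ne hn rfl)]))
      have hyzne : y ≠ z := fun hq => h0c (by rw [← g12, hq]; exact
        (by unfold digColor; rw [dif_neg (fun hn => max'_ne hn rfl)]))
      have hxzne : x ≠ z := fun hq => h0c (by rw [← g02, hq]; exact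
        (by unfold digColor; rw [dif_neg (fun hn => max'_ne hn rfl)]))
      have hXY := dSet_nonempty hxyne
      have hYZ := dSet_nonempty hyzne
      have hXZ := dSet_nonempty hxzne
      rw [← g01] at g12 g02
      unfold digColor at g12 g02
      rw [dif_pos hXY, dif_pos hYZ] at g12
      rw [dif_pos hXY, dif_pos hXZ] at g02
      set a := (dSet x y).max' hXY with ha
      set b := (dSet y z).max' hYZ with hb
      set c := (dSet x z).max' hXZ with hcdef
      have bb1 := Bool.toNat_le (f5 (x a) (y a))
      have bb2 := Bool.toNat_le (f5 (y b) (z b))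
      have bb3 := Bool.toNat_le (f5 (x c) (z c))
      have hba : b = a := Fin.ext (by omega)
      have hca : c = a := Fin.ext (by omega)
      rw [hba] at g12
      rw [hca] at g02
      have bit12 : f5 (y a) (z a) = f5 (x a) (y a) := by
        have hq : (f5 (y a) (z a)).toNat = (f5 (x a) (y a)).toNat := by omega
        exact toNat_inj hq
      have bit02 : f5 (x a) (z a) = f5 (x a) (y a) := by
        have hq : (f5 (x a) (z a)).toNat = (f5 (x a) (y a)).toNat := by omega
        exact toNat_inj hq
      have nxy : x a ≠ y a := max'_ne hXY
      have nyz : y a ≠ z a := by have := max'_ne hYZ; rw [← hb] at this; rwa [hba] at this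
      have nxz : x a ≠ z a := by have := max'_ne hXZ; rw [← hcdef] at this; rwa [hca] at this
      exact f5_tri (x a) (y a) (z a) nxy nyz nxz bit12.symm (bit12.trans bit02.symm)


open Fin.NatCast in
lemma master (t j m k N : ℕ) (ht : 3 ≤ t) (hm : m ≤ 2) (hk1 : 1 ≤ k)
    (hk : k = 2 * j + 2 ∨ (m = 1 ∧ k = 2 * j + 1)) (hN : N = (t - 1) * 5 ^ j * m) :
    ∃ c : Sym2 (Fin N) → Fin k, ¬ HasRainbowTriangle c ∧ ¬ HasMonoCopy (SGraph t 2) c := by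
  haveI : NeZero k := ⟨by omega⟩
  have hcard : Fintype.card (Fin (t - 1) × (Fin j → Fin 5) × Fin m) = N := by
    rw [Fintype.card_prod, Fintype.card_prod, Fintype.card_fun, Fintype.card_fin,
      Fintype.card_fin, Fintype.card_fin, hN]
    simp only [Fintype.card_fin]
    ring
  let e : Fin N ≃ Fin (t - 1) × (Fin j → Fin 5) × Fin m :=
    (Fintype.equivFinOfCardEq hcard).symm
  refine ⟨Sym2.lift ⟨fun u v => ((colorNat (e u) (e v) : ℕ) : Fin k), ?_⟩, ?_, ?_⟩
  · intro u v
    dsimp only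
    rw [colorNat_comm]
  · rintro ⟨x, y, z, a1, a2, a3⟩
    simp only [Sym2.lift_mk] at a1 a2 a3
    rcases colorNat_tri (e x) (e y) (e z) with hq | hq | hq
    · exact a1 (by rw [hq])
    · exact a2 (by rw [hq])
    · exact a3 (by rw [hq])
  · rintro ⟨f, col, hf⟩
    refine noMono ht rfl hm hk (f.trans e.toEmbedding) col.val ?_
    intro a b hab
    have := hf a b hab
    simp only [Sym2.lift_mk] at this
    have hb := colorNat_lt hk (e (f a)) (e (f b))
    have := congrArg Fin.val this
    rw [Fin.val_cast_of_lt hb] at this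
    exact this

lemma pull {t k n N : ℕ} (h : n ≤ N)
    (hc : ∃ c : Sym2 (Fin N) → Fin k, ¬ HasRainbowTriangle c ∧ ¬ HasMonoCopy (SGraph t 2) c) :
    ∃ c : Sym2 (Fin n) → Fin k, ¬ HasRainbowTriangle c ∧ ¬ HasMonoCopy (SGraph t 2) c := by
  obtain ⟨c, h1, h2⟩ := hc
  refine ⟨fun s => c (s.map (Fin.castLE h)), ?_, ?_⟩
  · rintro ⟨x, y, z, a1, a2, a3⟩
    exact h1 ⟨Fin.castLE h x, Fin.castLE h y, Fin.castLE h z,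
      by simpa using a1, by simpa using a2, by simpa using a3⟩
  · rintro ⟨f, col, hf⟩
    exact h2 ⟨f.trans ⟨Fin.castLE h, Fin.castLE_injective h⟩, col,
      fun a b hab => by simpa using hf a b hab⟩


end GRaux

theorem gallai_ramsey_St2_lower (k t : ℕ) (hk : 1 ≤ k) (ht : 3 ≤ t) :
    (Even k →
      (∃ c : Sym2 (Fin (2 * (t - 1) * 5 ^ ((k - 2) / 2))) → Fin k,
        ¬ HasRainbowTriangle c ∧ ¬ HasMonoCopy (SGraph t 2) c) ∧
      (∀ n : ℕ, (∀ c : Sym2 (Fin n) → Fin k,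
          HasRainbowTriangle c ∨ HasMonoCopy (SGraph t 2) c) →
        2 * (t - 1) * 5 ^ ((k - 2) / 2) + 1 ≤ n)) ∧
    (Odd k →
      (∃ c : Sym2 (Fin ((t - 1) * 5 ^ ((k - 1) / 2))) → Fin k,
        ¬ HasRainbowTriangle c ∧ ¬ HasMonoCopy (SGraph t 2) c) ∧
      (∀ n : ℕ, (∀ c : Sym2 (Fin n) → Fin k,
          HasRainbowTriangle c ∨ HasMonoCopy (SGraph t 2) c) →
        (t - 1) * 5 ^ ((k - 1) / 2) + 1 ≤ n)) := by
  constructor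
  · intro he
    have he2 := Nat.even_iff.mp he
    have hkeq : k = 2 * ((k - 2) / 2) + 2 := by omega
    have hex := GRaux.master t ((k - 2) / 2) 2 k (2 * (t - 1) * 5 ^ ((k - 2) / 2)) ht
      (le_refl 2) hk (Or.inl hkeq) (by ring)
    refine ⟨hex, ?_⟩
    intro n hn
    by_contra hlt
    push_neg at hlt
    obtain ⟨c, h1, h2⟩ := GRaux.pull (by omega : n ≤ 2 * (t - 1) * 5 ^ ((k - 2) / 2)) hex
    rcases hn c with h | h
    · exact h1 h
    · exact h2 h
  · intro ho
    have ho2 := Nat.odd_iff.mp ho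
    have hkeq : k = 2 * ((k - 1) / 2) + 1 := by omega
    have hex := GRaux.master t ((k - 1) / 2) 1 k ((t - 1) * 5 ^ ((k - 1) / 2)) ht
      (by omega) hk (Or.inr ⟨rfl, hkeq⟩) (by ring)
    refine ⟨hex, ?_⟩
    intro n hn
    by_contra hlt
    push_neg at hlt
    obtain ⟨c, h1, h2⟩ := GRaux.pull (by omega : n ≤ (t - 1) * 5 ^ ((k - 1) / 2)) hex
    rcases hn c with h | h
    · exact h1 h
    · exact h2 h
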